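/- Let t be a binary tree, let p be a valid descent from the root of t, and let q be a prefix of p, with v the node of t reached by following q. Then the number of light steps of p occurring after the prefix q (i.e., light steps within the remaining descent from v) is at most log₂(number of leaves of the subtree rooted at v) (i.e., at most Nat.log 2 (numLeaves v)). -/

import Mathlib

/-- The subtree of a binary tree reached by following a list of directions
(`false` = left, `true` = right); `none` if the descent is invalid. -/
def subtreeAt : Tree Unit → List Bool → Option (Tree Unit)
  | t, [] => some t
  | BinaryTree.nil, _ :: _ => none
  | BinaryTree.node _ l r, d :: p => subtreeAt (if d then r else l) p

/-- The number of light steps along a descent: steps from a node `v` into a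
child `c` with `2 * c.numLeaves ≤ v.numLeaves`. -/
def countLight : Tree Unit → List Bool → ℕ
  | _, [] => 0
  | BinaryTree.nil, _ :: _ => 0
  | BinaryTree.node _ l r, d :: p =>
      (if 2 * (if d then r else l).numLeaves ≤ l.numLeaves + r.numLeaves then 1 else 0)
        + countLight (if d then r else l) p

lemma subtreeAt_append (t : Tree Unit) (q rest : List Bool) :
    subtreeAt t (q ++ rest) = (subtreeAt t q).bind (fun v => subtreeAt v rest) := by
  induction q generalizing t with
  | nil => simp [subtreeAt]
  | cons d q ih =>
    cases t with
    | nil => simp [subtreeAt]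
    | node a l r => simp [subtreeAt, ih]

lemma countLight_le_log (v : Tree Unit) (rest : List Bool)
    (h : (subtreeAt v rest).isSome) :
    countLight v rest ≤ Nat.log 2 v.numLeaves := by
  induction rest generalizing v with
  | nil => simp [countLight]
  | cons d rest ih =>
    cases v with
    | nil => simp [subtreeAt] at h
    | node a l r =>
      simp only [subtreeAt] at h
      have ihc := ih _ h
      simp only [countLight, Tree.numLeaves]
      set c := if d then r else l with hc
      split_ifs with hlight
      · have h1 : 1 ≤ c.numLeaves := c.numLeaves_pos
        calc 1 + countLight c rest ≤ 1 + Nat.log 2 c.numLeaves := by simp only [Tree.numLeaves] at ihc; omega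
          _ = Nat.log 2 (2 * c.numLeaves) := by
              rw [mul_comm, Nat.log_mul_base (by norm_num) (by omega)]; omega
          _ ≤ Nat.log 2 (l.numLeaves + r.numLeaves) := Nat.log_mono_right hlight
      · have hle : c.numLeaves ≤ l.numLeaves + r.numLeaves := by
          have := l.numLeaves_pos; have := r.numLeaves_pos
          cases d <;> simp [hc]
        calc 0 + countLight c rest ≤ Nat.log 2 c.numLeaves := by simp only [Tree.numLeaves] at ihc; omega
          _ ≤ _ := Nat.log_mono_right hle

theorem light_steps_after_prefix_le_log (t : Tree Unit) (p q rest : List Bool)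
    (hp : p = q ++ rest) (hvalid : (subtreeAt t p).isSome)
    (v : Tree Unit) (hv : subtreeAt t q = some v) :
    countLight v rest ≤ Nat.log 2 v.numLeaves := by
  subst hp
  rw [subtreeAt_append, hv, Option.bind_some] at hvalid
  exact countLight_le_log v rest hvalid
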